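/- Let (X,p) be a TVS-cone metric space over a locally convex space E whose topology is generated by a family S of monotone seminorms (so the cone P is normal). For every sequence (x_n) in X: (x_n) is cone-Cauchy if and only if p(x_n, x_m) → 0 in the topology of E as m, n → ∞ (i.e., the double-indexed net (p(x_n,x_m)) tends to 0 along the product filter atTop × atTop). -/

import Mathlib

open Filter Topology

section Defs

variable {E : Type*} [AddCommGroup E] [Module ℝ E] [TopologicalSpace E]

/-- `P` is a closed, pointed convex cone with nonempty interior in the TVS `E`. -/
structure IsTVSCone (P : Set E) : Prop where
  add_mem : ∀ ⦃a⦄, a ∈ P → ∀ ⦃b⦄, b ∈ P → a + b ∈ P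
  smul_mem : ∀ (r : ℝ), 0 ≤ r → ∀ ⦃a⦄, a ∈ P → r • a ∈ P
  pointed : ∀ a, a ∈ P → -a ∈ P → a = 0
  isClosed : IsClosed P
  int_nonempty : (interior P).Nonempty

/-- `a ≤ b` with respect to the cone `P`. -/
def ConeLe (P : Set E) (a b : E) : Prop := b - a ∈ P

/-- `a ≪ b` with respect to the cone `P`. -/
def ConeLt (P : Set E) (a b : E) : Prop := b - a ∈ interior P

/-- `p : X × X → E` is a TVS-cone metric over the cone `P`. -/
structure IsConeMetric (P : Set E) {X : Type*} (p : X → X → E) : Prop where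
  nonneg : ∀ x y, ConeLe P 0 (p x y)
  eq_zero_iff : ∀ x y, p x y = 0 ↔ x = y
  symm : ∀ x y, p x y = p y x
  triangle : ∀ x y z, ConeLe P (p x y) (p x z + p z y)

/-- The sequence `x` cone-converges to `a`. -/
def ConeConverges (P : Set E) {X : Type*} (p : X → X → E) (x : ℕ → X) (a : X) : Prop :=
  ∀ c, c ∈ interior P → ∃ N, ∀ n ≥ N, ConeLt P (p (x n) a) c

/-- The sequence `x` is cone-Cauchy. -/
def ConeCauchy (P : Set E) {X : Type*} (p : X → X → E) (x : ℕ → X) : Prop :=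
  ∀ c, c ∈ interior P → ∃ N, ∀ n ≥ N, ∀ m ≥ N, ConeLt P (p (x n) (x m)) c

/-- `(X, p)` is cone-complete. -/
def ConeComplete (P : Set E) {X : Type*} (p : X → X → E) : Prop :=
  ∀ x : ℕ → X, ConeCauchy P p x → ∃ a, ConeConverges P p x a

/-- The nonlinear scalarization ξ_e(y) = inf {t : t • e - y ∈ P}. -/
noncomputable def xiScal (P : Set E) (e y : E) : ℝ := sInf {t : ℝ | t • e - y ∈ P}

/-- The open ball `B(x, c) = {y : p x y ≪ c}`. -/
def coneBall (P : Set E) {X : Type*} (p : X → X → E) (x : X) (c : E) : Set X :=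
  {y | ConeLt P (p x y) c}

/-- The cone metric topology `τ_p`, generated by the balls `B(x,c)`, `c ≫ 0`. -/
def coneTopology (P : Set E) {X : Type*} (p : X → X → E) : TopologicalSpace X :=
  TopologicalSpace.generateFrom {s | ∃ x c, c ∈ interior P ∧ s = coneBall P p x c}

end Defs

open scoped Pointwise in
lemma smul_interior_mem {E : Type*} [AddCommGroup E] [Module ℝ E] [TopologicalSpace E]
    [ContinuousSMul ℝ E] {P : Set E} (hP : IsTVSCone P) {t : ℝ} (ht : 0 < t) {e : E}
    (he : e ∈ interior P) : t • e ∈ interior P := by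
  have h1 : t • e ∈ t • interior P := Set.smul_mem_smul_set he
  rw [← interior_smul₀ (ne_of_gt ht)] at h1
  exact interior_mono (fun y hy => by
    obtain ⟨z, hz, rfl⟩ := hy
    exact hP.smul_mem t ht.le hz) h1

/-- over a normal cone in a locally convex space, `x` is cone-Cauchy iff
`p (x_n) (x_m) → 0` in `E` along the product filter `atTop ×ˢ atTop`. -/
theorem stmt_2 {E X : Type*} [AddCommGroup E] [Module ℝ E] [TopologicalSpace E]
    [IsTopologicalAddGroup E] [ContinuousSMul ℝ E] [T2Space E] [Nonempty X]
    {ι : Type*} [Nonempty ι] (S : ι → Seminorm ℝ E) (hS : WithSeminorms S)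
    (P : Set E) (hP : IsTVSCone P)
    (hmono : ∀ i : ι, ∀ a b : E, a ∈ P → ConeLe P a b → S i a ≤ S i b)
    (p : X → X → E) (hp : IsConeMetric P p) (x : ℕ → X) :
    ConeCauchy P p x ↔
      Tendsto (fun nm : ℕ × ℕ => p (x nm.1) (x nm.2)) (atTop ×ˢ atTop) (nhds 0) := by

  constructor
  · intro h
    rw [Filter.prod_atTop_atTop_eq]
    rw [hS.tendsto_nhds]
    intro i ε hε
    obtain ⟨e, he⟩ := hP.int_nonempty
    set t : ℝ := ε / (S i e + 1) with ht
    have hSe : 0 ≤ S i e := apply_nonneg _ _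
    have htpos : 0 < t := div_pos hε (by linarith)
    have hc : t • e ∈ interior P := smul_interior_mem hP htpos he
    obtain ⟨N, hN⟩ := h (t • e) hc
    rw [eventually_atTop]
    refine ⟨(N, N), fun nm hnm => ?_⟩
    have hlt := hN nm.1 hnm.1 nm.2 hnm.2
    have hle : ConeLe P (p (x nm.1) (x nm.2)) (t • e) := interior_subset hlt
    have h0 : p (x nm.1) (x nm.2) - 0 ∈ P := hp.nonneg _ _
    rw [sub_zero] at h0
    have hmon := hmono i _ _ h0 hle
    have : S i (t • e) = t * S i e := by
      rw [map_smul_eq_mul, Real.norm_eq_abs, abs_of_pos htpos]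
    rw [sub_zero]
    calc S i (p (x nm.1) (x nm.2)) ≤ S i (t • e) := hmon
      _ = t * S i e := this
      _ < ε := by
          rw [ht, div_mul_eq_mul_div, div_lt_iff₀ (by linarith)]
          nlinarith
  · intro h c hc
    have hV : {y : E | c - y ∈ interior P} ∈ nhds (0 : E) := by
      have hcont : Continuous fun y : E => c - y := continuous_const.sub continuous_id
      have := hcont.continuousAt (x := (0:E)) (IsOpen.mem_nhds isOpen_interior (by simpa using hc))
      exact this
    have hev : ∀ᶠ nm : ℕ × ℕ in atTop, c - p (x nm.1) (x nm.2) ∈ interior P := by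
      rw [← Filter.prod_atTop_atTop_eq]
      exact h hV
    obtain ⟨⟨N₁, N₂⟩, hN⟩ := eventually_atTop.1 hev
    refine ⟨max N₁ N₂, fun n hn m hm => ?_⟩
    have := hN (n, m) ⟨le_trans (le_max_left _ _) hn, le_trans (le_max_right _ _) hm⟩
    exact this
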